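/- Let X be a coupling matrix for (p,q), Y ∈ ℝ^{n×m} arbitrary, P = diag(p), Q = diag(q). Suppose α ∈ ℝ^n satisfies (P − X Q^{-1} Xᵀ) α = Y 1_m − X Q^{-1} Yᵀ 1_n, and set β = Q^{-1}(Yᵀ 1_n − Xᵀ α). Then the matrix Π(Y) = Y − (α 1_mᵀ + 1_n βᵀ) ⊙ X lies in the tangent space, i.e. Π(Y)·1_m = 0_n and Π(Y)ᵀ·1_n = 0_m. -/
import Mathlib


open Matrix

theorem projection_lies_in_tangent (n m : ℕ)
    (p : Fin n → ℝ) (q : Fin m → ℝ)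
    (hp : ∀ i, 0 < p i) (hq : ∀ j, 0 < q j)
    (X : Matrix (Fin n) (Fin m) ℝ) (hX : ∀ i j, 0 < X i j)
    (hrow : X.mulVec (fun _ => 1) = p) (hcol : Xᵀ.mulVec (fun _ => 1) = q)
    (Y : Matrix (Fin n) (Fin m) ℝ)
    (α : Fin n → ℝ)
    (hα : (Matrix.diagonal p - X * Matrix.diagonal (fun j => (q j)⁻¹) * Xᵀ).mulVec α =
          Y.mulVec (fun _ => 1) -
            (X * Matrix.diagonal (fun j => (q j)⁻¹)).mulVec (Yᵀ.mulVec (fun _ => 1)))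
    (β : Fin m → ℝ)
    (hβ : β = (Matrix.diagonal (fun j => (q j)⁻¹)).mulVec
            (Yᵀ.mulVec (fun _ => 1) - Xᵀ.mulVec α))
    (PiY : Matrix (Fin n) (Fin m) ℝ)
    (hPiY : ∀ i j, PiY i j = Y i j - (α i + β j) * X i j) :
    PiY.mulVec (fun _ => 1) = 0 ∧ PiYᵀ.mulVec (fun _ => 1) = 0 := by
  have hq' : ∀ j, q j ≠ 0 := fun j => (hq j).ne'
  -- key vector identity: X β = Y 1 - P α
  have key : X.mulVec β = Y.mulVec (fun _ => 1) - (Matrix.diagonal p).mulVec α := by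
    rw [hβ]
    rw [Matrix.sub_mulVec] at hα
    simp only [Matrix.mulVec_sub, Matrix.mulVec_mulVec, Matrix.mul_assoc] at hα ⊢
    linear_combination hα
  constructor
  · funext i
    have hr : ∑ j, X i j = p i := by
      have := congrFun hrow i
      simpa [Matrix.mulVec, dotProduct] using this
    have hk : ∑ j, X i j * β j = (∑ j, Y i j) - p i * α i := by
      have := congrFun key i
      simp only [Pi.sub_apply, Matrix.mulVec_diagonal] at this
      simpa [Matrix.mulVec, dotProduct] using this
    have expand : ∑ j, (α i + β j) * X i j = α i * (∑ j, X i j) + ∑ j, X i j * β j := by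
      rw [Finset.mul_sum, ← Finset.sum_add_distrib]
      exact Finset.sum_congr rfl fun j _ => by ring
    simp only [Matrix.mulVec, dotProduct, hPiY, mul_one, Pi.zero_apply]
    rw [Finset.sum_sub_distrib, expand, hr, hk]
    ring
  · funext j
    have hc : ∑ i, X i j = q j := by
      have := congrFun hcol j
      simpa [Matrix.mulVec, dotProduct, Matrix.transpose_apply] using this
    have hβj : β j = (q j)⁻¹ * ((∑ i, Y i j) - ∑ i, X i j * α i) := by
      have := congrFun hβ j
      simp only [Matrix.mulVec_diagonal, Pi.sub_apply] at this
      simpa [Matrix.mulVec, dotProduct, Matrix.transpose_apply] using this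
    have expand : ∑ i, (α i + β j) * X i j = (∑ i, X i j * α i) + β j * (∑ i, X i j) := by
      rw [Finset.mul_sum, ← Finset.sum_add_distrib]
      exact Finset.sum_congr rfl fun i _ => by ring
    simp only [Matrix.mulVec, dotProduct, hPiY, Matrix.transpose_apply, mul_one,
      Pi.zero_apply]
    rw [Finset.sum_sub_distrib, expand, hc, hβj,
      inv_mul_eq_div, div_mul_eq_mul_div, mul_div_assoc, div_self (hq' j), mul_one]
    ring
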